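/- arXiv:2212.08928 — 3 statements merged into one kernel-verified Lean document; each statement's English description precedes it below -/
import Mathlib

section
/- Let G be a group with a finitely generated abelian normal subgroup G₁ such that G/G₁ is finite. Let h₁,…,h_m generate G₁ and let g₁,…,g_k ∈ G represent every conjugacy class of G/G₁. Let ρ₁, ρ₂ be finite-dimensional complex representations of G. If for every finite sequence of elements from K = {g₁,…,g_k, h₁,…,h_m, h₁⁻¹,…,h_m⁻¹} the summed-by-signature traces of the images under ρ₁ and ρ₂ agree (equivalently, the divisors of det(Σ xᵢ ρⱼ(kᵢ) − I) coincide for j=1,2), then the characters χ_{ρ₁} and χ_{ρ₂} are equal on all of G. -/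
open Matrix

/-- The matrix-valued monoid hom underlying a `GL`-valued representation. -/
private def matHom {G : Type*} [Group G] {d : ℕ} (ρ : G →* GL (Fin d) ℂ) :
    G →* Matrix (Fin d) (Fin d) ℂ := (Units.coeHom _).comp ρ

/-- Traces are invariant under conjugation of the group element. -/
private lemma repTraceConj {G : Type*} [Group G] {d : ℕ} (ρ : G →* GL (Fin d) ℂ)
    (y w : G) :
    Matrix.trace (matHom ρ (y * w * y⁻¹)) = Matrix.trace (matHom ρ w) := by
  rw [mul_assoc, _root_.map_mul, Matrix.trace_mul_comm, ← _root_.map_mul]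
  simp [mul_assoc]

/-- For a list of pairwise commuting elements together with one extra element `a`,
every permutation of `a :: l` has the same trace under a representation. -/
private lemma trace_perm {G : Type*} [Group G] {d : ℕ} (ρ : G →* GL (Fin d) ℂ)
    (a : G) (l : List G) (hcomm : l.Pairwise Commute) :
    ∀ l' ∈ (a :: l).permutations,
      Matrix.trace (matHom ρ l'.prod) = Matrix.trace (matHom ρ (a * l.prod)) := by
  intro l' hl'
  have hperm : l'.Perm (a :: l) := List.mem_permutations.mp hl'
  have ha : a ∈ l' := hperm.symm.subset (List.mem_cons_self (a := a) (l := l))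
  obtain ⟨A, B, rfl⟩ := List.append_of_mem ha
  have h1 : (A ++ B).Perm l := by
    have h2 : (a :: (A ++ B)).Perm (a :: l) := List.perm_middle.symm.trans hperm
    exact (List.perm_cons a).mp h2
  have hBA : (B ++ A).Perm l := List.perm_append_comm.trans h1
  have hcommBA : (B ++ A).Pairwise Commute :=
    (hBA.pairwise_iff fun huv => Commute.symm huv).mpr hcomm
  have hprod : (B ++ A).prod = l.prod := hBA.prod_eq' hcommBA
  have : (A ++ a :: B).prod = A.prod * (a * B.prod) := by
    rw [List.prod_append, List.prod_cons]
  rw [this, _root_.map_mul, Matrix.trace_mul_comm, ← _root_.map_mul]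
  congr 1
  rw [mul_assoc, ← List.prod_append, hprod]

/-- For a group `G` of affine type (finitely generated abelian normal subgroup `G₁` with finite
quotient), with `h₁,…,h_m` generating `G₁` and `g₁,…,g_k` representing every conjugacy class of
`G/G₁`: if for every finite sequence of elements from
`K = {g₁,…,g_k, h₁,…,h_m, h₁⁻¹,…,h_m⁻¹}` the traces of images under `ρ₁` and `ρ₂`, summed over
all permutations of the sequence (i.e. summed by signature), agree, then `χ_{ρ₁} = χ_{ρ₂}`. -/
theorem stmt2 {G : Type*} [Group G] (G₁ : Subgroup G) [G₁.Normal]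
    (hab : ∀ x ∈ G₁, ∀ y ∈ G₁, x * y = y * x)
    [Finite (G ⧸ G₁)]
    (m k d : ℕ) (h : Fin m → G) (hmem : ∀ i, h i ∈ G₁)
    (hgen : Subgroup.closure (Set.range h) = G₁)
    (g : Fin k → G)
    (hrep : ∀ q : G ⧸ G₁, ∃ j, IsConj ((g j : G) : G ⧸ G₁) q)
    (ρ₁ ρ₂ : G →* GL (Fin d) ℂ)
    (K : Set G) (hK : K = Set.range g ∪ Set.range h ∪ Set.range fun i => (h i)⁻¹)
    (hspec : ∀ l : List G, (∀ x ∈ l, x ∈ K) →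
      (l.permutations.map fun l' =>
        Matrix.trace ((l'.map fun x => ((ρ₁ x : GL (Fin d) ℂ) : Matrix (Fin d) (Fin d) ℂ)).prod)).sum =
      (l.permutations.map fun l' =>
        Matrix.trace ((l'.map fun x => ((ρ₂ x : GL (Fin d) ℂ) : Matrix (Fin d) (Fin d) ℂ)).prod)).sum) :
    ∀ x : G, Matrix.trace ((ρ₁ x : GL (Fin d) ℂ) : Matrix (Fin d) (Fin d) ℂ) =
      Matrix.trace ((ρ₂ x : GL (Fin d) ℂ) : Matrix (Fin d) (Fin d) ℂ) := by
  intro x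
  -- Step 1: find a conjugacy representative g j for x modulo G₁.
  obtain ⟨j, hj⟩ := hrep ((x : G ⧸ G₁))
  rw [isConj_iff] at hj
  obtain ⟨c, hc⟩ := hj
  obtain ⟨y, rfl⟩ := QuotientGroup.mk_surjective c
  -- x = y * g j * y⁻¹ * a with a ∈ G₁.
  have hxa : ((y * g j * y⁻¹ : G) : G ⧸ G₁) = (x : G ⧸ G₁) := by
    simpa using hc
  have haG1 : (y * g j * y⁻¹)⁻¹ * x ∈ G₁ := (QuotientGroup.eq).mp hxa
  set a : G := (y * g j * y⁻¹)⁻¹ * x with ha_def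
  have hx : x = y * (g j * (y⁻¹ * a * y)) * y⁻¹ := by
    have : x = y * g j * y⁻¹ * a := by rw [ha_def]; group
    rw [this]; group
  set b : G := y⁻¹ * a * y with hb_def
  have hbG1 : b ∈ G₁ := by
    have := Subgroup.Normal.conj_mem ‹G₁.Normal› a haG1 y⁻¹
    simpa [hb_def, mul_assoc] using this
  -- Step 2: write b as a product of letters from {h i, (h i)⁻¹}.
  have hb_closure : b ∈ Submonoid.closure (Set.range h ∪ (Set.range h)⁻¹) := by
    rw [← Subgroup.closure_toSubmonoid, hgen]
    exact hbG1
  obtain ⟨l, hl, hlprod⟩ := Submonoid.exists_list_of_mem_closure hb_closure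
  -- all letters lie in K and in G₁
  have hlK : ∀ z ∈ l, z ∈ K := by
    intro z hz
    rcases hl z hz with h1 | h1
    · rw [hK]; exact Or.inl (Or.inr h1)
    · rw [hK]
      obtain ⟨i, hi⟩ := (Set.mem_inv.mp h1)
      refine Or.inr ⟨i, ?_⟩
      show (h i)⁻¹ = z
      rw [hi, inv_inv]
  have hlG1 : ∀ z ∈ l, z ∈ G₁ := by
    intro z hz
    rcases hl z hz with h1 | h1
    · obtain ⟨i, rfl⟩ := h1; exact hmem i
    · obtain ⟨i, hi⟩ := Set.mem_inv.mp h1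
      have hz' : z = (h i)⁻¹ := by rw [hi, inv_inv]
      rw [hz']; exact G₁.inv_mem (hmem i)
  have hcomm : l.Pairwise Commute := by
    refine List.pairwise_of_forall_mem_list fun u hu v hv => ?_
    exact hab u (hlG1 u hu) v (hlG1 v hv)
  -- Step 3: use hspec on the list g j :: l.
  have hKlist : ∀ z ∈ (g j :: l), z ∈ K := by
    intro z hz
    rcases List.mem_cons.mp hz with rfl | hz
    · rw [hK]; exact Or.inl (Or.inl ⟨j, rfl⟩)
    · exact hlK z hz
  have hsum := hspec (g j :: l) hKlist
  -- identify each side as (number of permutations) • constant trace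
  have key : ∀ ρ : G →* GL (Fin d) ℂ,
      ((g j :: l).permutations.map fun l' =>
        Matrix.trace ((l'.map fun z => ((ρ z : GL (Fin d) ℂ) : Matrix (Fin d) (Fin d) ℂ)).prod)).sum
      = ((g j :: l).permutations.length : ℂ) *
          Matrix.trace (matHom ρ (g j * l.prod)) := by
    intro ρ
    have hmapeq : ((g j :: l).permutations.map fun l' =>
        Matrix.trace ((l'.map fun z => ((ρ z : GL (Fin d) ℂ) : Matrix (Fin d) (Fin d) ℂ)).prod))
        = ((g j :: l).permutations.map fun _ => Matrix.trace (matHom ρ (g j * l.prod))) := by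
      refine List.map_congr_left fun l' hl' => ?_
      have hF : ((l'.map fun z => ((ρ z : GL (Fin d) ℂ) : Matrix (Fin d) (Fin d) ℂ)).prod)
          = matHom ρ l'.prod := by
        rw [MonoidHom.map_list_prod]
        rfl
      rw [hF]
      exact trace_perm ρ (g j) l hcomm l' hl'
    rw [hmapeq, List.map_const', List.sum_replicate, nsmul_eq_mul]
  rw [key ρ₁, key ρ₂] at hsum
  have hlen : (((g j :: l).permutations.length : ℂ)) ≠ 0 := by
    have : (g j :: l) ∈ (g j :: l).permutations := List.mem_permutations.mpr (List.Perm.refl _)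
    have hpos : 0 < (g j :: l).permutations.length := List.length_pos_iff.mpr (List.ne_nil_of_mem this)
    exact Nat.cast_ne_zero.mpr hpos.ne'
  have htr : Matrix.trace (matHom ρ₁ (g j * l.prod)) = Matrix.trace (matHom ρ₂ (g j * l.prod)) :=
    mul_left_cancel₀ hlen hsum
  -- Step 4: transfer back to x by conjugation invariance of trace.
  have hx1 : ∀ ρ : G →* GL (Fin d) ℂ,
      Matrix.trace ((ρ x : GL (Fin d) ℂ) : Matrix (Fin d) (Fin d) ℂ)
      = Matrix.trace (matHom ρ (g j * l.prod)) := by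
    intro ρ
    have : Matrix.trace ((ρ x : GL (Fin d) ℂ) : Matrix (Fin d) (Fin d) ℂ)
        = Matrix.trace (matHom ρ x) := rfl
    rw [this, hx, repTraceConj, hlprod]
  rw [hx1 ρ₁, hx1 ρ₂, htr]
end

section
/- In the affine Coxeter group Ãₙ with generators a₁,…,a_{n+1} (indices mod n+1) and relations aᵢ² = 1, (aᵢa_{i+1})³ = 1, and aᵢaⱼ = aⱼaᵢ for |i−j| ≥ 2 (mod n+1), define pⱼ = a_{j+1}a_{j+2}⋯a_{j−1} (the product of all generators in cyclic order starting from a_{j+1}). Then for all 1 ≤ i, j ≤ n+1: aᵢpⱼ = p_{j−1}a_{i−1} if i = j; aᵢpⱼ = p_{j+1}a_{i−1} if i = j+1 (mod n+1); and aᵢpⱼ = pⱼa_{i−1} otherwise. -/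
open CoxeterMatrix

/-- The affine Coxeter matrix of type Ãₙ on the cyclic index set `ZMod (n+1)`:
`aᵢ² = 1`, `(aᵢa_{i+1})³ = 1`, and non-adjacent generators (mod n+1) commute. -/
def affineA (n : ℕ) : CoxeterMatrix (ZMod (n + 1)) where
  M := fun i j => if i = j then 1 else if i = j + 1 ∨ j = i + 1 then 3 else 2
  isSymm := by
    ext i j
    by_cases h : i = j
    · simp [Matrix.transpose, h]
    · simp only [Matrix.transpose, Matrix.of_apply]
      rw [if_neg h, if_neg (Ne.symm h)]
      exact if_congr or_comm rfl rfl
  diagonal := fun i => by simp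
  off_diagonal := fun i j h => by
    simp only [if_neg h]
    split <;> simp

/-- The Coxeter generators `aᵢ` of `Ãₙ`. -/
def aa (n : ℕ) (i : ZMod (n + 1)) : (affineA n).Group := (affineA n).simple i

/-- The cyclic products `pⱼ = a_{j+1} a_{j+2} ⋯ a_{j-1}` (indices mod `n+1`). -/
def pp (n : ℕ) (j : ZMod (n + 1)) : (affineA n).Group :=
  ((List.range n).map fun k => aa n (j + 1 + (k : ℕ))).prod

/-- `gⱼ = pⱼ⁻¹ p_{j+1}`. -/
def gg (n : ℕ) (j : ZMod (n + 1)) : (affineA n).Group := (pp n j)⁻¹ * pp n (j + 1)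

/-- The subgroup `N = ⟨pⱼ⁻¹pᵢ : i, j⟩` of `Ãₙ`. -/
def NN (n : ℕ) : Subgroup (affineA n).Group :=
  Subgroup.closure {x | ∃ i j : ZMod (n + 1), x = (pp n j)⁻¹ * pp n i}

/-- The standard parabolic subgroup `⟨a₁,…,aₙ⟩` of `Ãₙ` (all generators except `a_{n+1} = a₀`). -/
def parab (n : ℕ) : Subgroup (affineA n).Group :=
  Subgroup.closure {x | ∃ i : ZMod (n + 1), i ≠ 0 ∧ x = aa n i}

lemma aa_eq (n : ℕ) (i : ZMod (n+1)) : aa n i = (affineA n).toCoxeterSystem.simple i := by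
  rw [CoxeterMatrix.toCoxeterSystem_simple]; rfl

lemma aa_sq (n : ℕ) (i : ZMod (n+1)) : aa n i * aa n i = 1 := by
  rw [aa_eq]; exact (affineA n).toCoxeterSystem.simple_mul_simple_self i

lemma cast_ne_zero (n : ℕ) (m : ℕ) (h0 : 0 < m) (h1 : m < n+1) : (m : ZMod (n+1)) ≠ 0 := by
  rw [Ne, ZMod.natCast_eq_zero_iff]
  intro hd
  have := Nat.le_of_dvd h0 hd
  omega

lemma castInjZ (n a b : ℕ) (ha : a < n+1) (hb : b < n+1)
    (h : (a : ZMod (n+1)) = b) : a = b := by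
  rw [← ZMod.val_cast_of_lt ha, ← ZMod.val_cast_of_lt hb, h]

lemma aa_comm (n : ℕ) (i d : ZMod (n+1)) (h1 : i ≠ d) (h2 : i ≠ d+1) (h3 : d ≠ i+1) :
    aa n i * aa n d = aa n d * aa n i := by
  have hM : (affineA n).M i d = 2 := by
    simp only [affineA, if_neg h1, if_neg (not_or.mpr ⟨h2, h3⟩)]
  have key := (affineA n).toCoxeterSystem.simple_mul_simple_pow i d
  rw [hM, pow_two] at key
  simp only [aa_eq]
  calc (affineA n).toCoxeterSystem.simple i * (affineA n).toCoxeterSystem.simple d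
      = ((affineA n).toCoxeterSystem.simple i * (affineA n).toCoxeterSystem.simple d)⁻¹ := by
        rw [inv_eq_of_mul_eq_one_right key]
    _ = _ := by
        simp only [mul_inv_rev, CoxeterSystem.inv_simple]

lemma aa_braid (n : ℕ) (hn : 1 ≤ n) (i : ZMod (n+1)) :
    aa n (i+1) * (aa n i * aa n (i+1)) = aa n i * aa n (i+1) * aa n i := by
  have h1 : (i + 1 : ZMod (n+1)) ≠ i := by
    intro h
    exact cast_ne_zero n 1 one_pos (by omega : 1 < n + 1)
      (by rw [Nat.cast_one]; linear_combination h)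
  have hM : (affineA n).M (i+1) i = 3 := by
    simp only [affineA, if_neg h1]
    simp
  have key := (affineA n).toCoxeterSystem.simple_mul_simple_pow (i+1) i
  rw [hM] at key
  simp only [aa_eq]
  set s := (affineA n).toCoxeterSystem.simple with hs
  have e : (s (i+1) * s i) ^ 3 = (s (i+1) * (s i * s (i+1))) * (s i * (s (i+1) * s i)) := by
    rw [pow_succ, pow_two]
    simp [mul_assoc]
  rw [e] at key
  calc s (i+1) * (s i * s (i+1)) = (s i * (s (i+1) * s i))⁻¹ :=
        eq_inv_of_mul_eq_one_left key
    _ = _ := by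
        rw [hs]; simp only [mul_inv_rev, CoxeterSystem.inv_simple, mul_assoc]

def P (n : ℕ) (c : ZMod (n+1)) (m : ℕ) : (affineA n).Group :=
  ((List.range m).map fun k => aa n (c + (k:ℕ))).prod

lemma pp_eq_P (n : ℕ) (j : ZMod (n+1)) : pp n j = P n (j+1) n := rfl

lemma P_succ (n : ℕ) (c : ZMod (n+1)) (m : ℕ) :
    P n c (m+1) = P n c m * aa n (c + m) := by
  simp [P, List.range_succ]

lemma P_one (n : ℕ) (c : ZMod (n+1)) : P n c 1 = aa n c := by
  simp [P, show List.range 1 = [0] from rfl]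

lemma P_add (n : ℕ) (c : ZMod (n+1)) (m1 m2 : ℕ) :
    P n c (m1+m2) = P n c m1 * P n (c + m1) m2 := by
  induction m2 with
  | zero => simp [P]
  | succ m2 ih =>
      rw [← Nat.add_assoc, P_succ, ih, P_succ, mul_assoc]
      congr 2
      push_cast
      ring

lemma comm_P (n : ℕ) (x : (affineA n).Group) (c : ZMod (n+1)) (m : ℕ)
    (h : ∀ k : ℕ, k < m → x * aa n (c + k) = aa n (c + k) * x) :
    x * P n c m = P n c m * x := by
  induction m with
  | zero => simp [P]
  | succ m ih =>
      rw [P_succ, ← mul_assoc, ih (fun k hk => h k (by omega)), mul_assoc,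
        h m (by omega), ← mul_assoc]


/-- Relations between the generators `aᵢ` and the cyclic products `pⱼ` in `Ãₙ`. -/
theorem stmt4 (n : ℕ) (hn : 2 ≤ n) (i j : ZMod (n + 1)) :
    (i = j → aa n i * pp n j = pp n (j - 1) * aa n (i - 1)) ∧
    (i = j + 1 → aa n i * pp n j = pp n (j + 1) * aa n (i - 1)) ∧
    (i ≠ j → i ≠ j + 1 → aa n i * pp n j = pp n j * aa n (i - 1)) := by
  have hz : ((n:ℕ) : ZMod (n+1)) + 1 = 0 := by
    have h := ZMod.natCast_self (n+1)
    push_cast at h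
    linear_combination h
  refine ⟨?_, ?_, ?_⟩
  · intro h
    rw [h]
    have e1 : pp n (j - 1) = P n j n := by rw [pp_eq_P, sub_add_cancel]
    rw [pp_eq_P, e1]
    calc aa n j * P n (j+1) n = P n j 1 * P n (j + ((1:ℕ):ZMod (n+1))) n := by
          rw [P_one]; norm_num
      _ = P n j (1 + n) := (P_add n j 1 n).symm
      _ = P n j (n + 1) := congrArg (P n j) (by omega)
      _ = P n j n * aa n (j + (n:ℕ)) := P_succ n j n
      _ = P n j n * aa n (j - 1) := by
          rw [show (j + ((n:ℕ) : ZMod (n+1))) = j - 1 by linear_combination hz]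
  · intro h
    rw [h]
    have h2 : ((2 + (n-1) : ℕ) : ZMod (n+1)) = 0 := by
      rw [show 2 + (n-1) = n+1 from by omega]
      exact ZMod.natCast_self _
    have hsplit : pp n j = P n (j+1) 1 * P n (j+1+1) (n-1) := by
      have e := P_add n (j+1) 1 (n-1)
      rw [show 1 + (n-1) = n from by omega] at e
      rw [pp_eq_P, e]
      norm_num
    have hsplit2 : pp n (j+1) = P n (j+1+1) (n-1) * aa n j := by
      have e := P_succ n (j+1+1) (n-1)
      rw [show (n-1) + 1 = n from by omega] at e
      rw [pp_eq_P, e]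
      congr 1
      rw [show (j + 1 + 1 + ((n-1:ℕ) : ZMod (n+1))) = j by push_cast at h2 ⊢; linear_combination h2]
    rw [hsplit, hsplit2, P_one, ← mul_assoc, aa_sq, one_mul,
      show (j + 1 - 1 : ZMod (n+1)) = j by ring, mul_assoc, aa_sq, mul_one]
  · intro hij hij1
    set t := (i - (j+1)).val with ht
    have htcast : ((t:ℕ) : ZMod (n+1)) = i - (j+1) := ZMod.natCast_rightInverse _
    have hi : i = j + 1 + (t:ℕ) := by rw [htcast]; ring
    have htlt : t < n+1 := ZMod.val_lt _
    have ht0 : t ≠ 0 := by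
      intro h
      apply hij1
      rw [hi, h]
      simp
    have htn : t ≠ n := by
      intro h
      apply hij
      rw [hi, h]
      linear_combination hz
    set u := t - 1 with hu
    set v := n - 1 - t with hv
    have htu : t = u + 1 := by omega
    have hn2 : n = u + (2 + v) := by omega
    set c := j + 1 + ((u:ℕ) : ZMod (n+1)) with hc
    have hic : i = c + 1 := by
      rw [hi, htu, hc]
      push_cast
      ring
    have hci : aa n (i - 1) = aa n c := by rw [hic]; ring_nf
    have hppj : pp n j = P n (j+1) u * (P n c 2 * P n (c+2) v) := by
      have e := P_add n (j+1) u (2+v)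
      rw [show u + (2+v) = n from by omega] at e
      rw [pp_eq_P, e, P_add, ← hc]
      norm_num
    have hP2 : P n c 2 = aa n c * aa n (c+1) := by
      rw [show (2:ℕ) = 1 + 1 from rfl, P_succ, P_one, Nat.cast_one]
    -- aa i commutes with block A
    have hA : aa n i * P n (j+1) u = P n (j+1) u * aa n i := by
      apply comm_P
      intro k hk
      apply aa_comm
      · intro h
        have hk' : ((k:ℕ) : ZMod (n+1)) = ((t:ℕ) : ZMod (n+1)) := by
          rw [hi] at h
          linear_combination -h
        have := castInjZ n k t (by omega) (by omega) hk'
        omega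
      · intro h
        have hk' : ((t:ℕ) : ZMod (n+1)) = (((k+1):ℕ) : ZMod (n+1)) := by
          rw [hi] at h
          push_cast
          linear_combination h
        have := castInjZ n t (k+1) (by omega) (by omega) hk'
        omega
      · intro h
        have hk' : ((k:ℕ) : ZMod (n+1)) = (((t+1):ℕ) : ZMod (n+1)) := by
          rw [hi] at h
          push_cast
          linear_combination h
        have := castInjZ n k (t+1) (by omega) (by omega) hk'
        omega
    -- braid at the pair
    have hpair : aa n i * P n c 2 = P n c 2 * aa n c := by
      rw [hP2, hic, ← mul_assoc]
      exact aa_braid n (by omega) c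
    -- aa c commutes with block B
    have hB : aa n c * P n (c+2) v = P n (c+2) v * aa n c := by
      apply comm_P
      intro k hk
      apply aa_comm
      · intro h
        apply cast_ne_zero n (2+k) (by omega) (by omega)
        push_cast
        linear_combination -h
      · intro h
        apply cast_ne_zero n (3+k) (by omega) (by omega)
        push_cast
        linear_combination -h
      · intro h
        apply cast_ne_zero n (1+k) (by omega) (by omega)
        push_cast
        linear_combination h
    rw [hppj, hci]
    calc aa n i * (P n (j+1) u * (P n c 2 * P n (c+2) v))
        = (aa n i * P n (j+1) u) * (P n c 2 * P n (c+2) v) := by rw [mul_assoc]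
      _ = P n (j+1) u * ((aa n i * P n c 2) * P n (c+2) v) := by
          rw [hA]; simp only [mul_assoc]
      _ = P n (j+1) u * (P n c 2 * (aa n c * P n (c+2) v)) := by
          rw [hpair]; simp only [mul_assoc]
      _ = P n (j+1) u * (P n c 2 * (P n (c+2) v * aa n c)) := by rw [hB]
      _ = P n (j+1) u * (P n c 2 * P n (c+2) v) * aa n c := by
          simp only [mul_assoc]
end

section
/- In the finite Coxeter group Aₙ (symmetric group S_{n+1} with Coxeter generators a₁,…,aₙ), every element is conjugate to an element in echelon form δ₁δ₂⋯δₙ, where each δᵢ ∈ {1, aᵢ}. -/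
open CoxeterMatrix List

namespace Stmt17Aux

variable {n : ℕ}

/-- The Coxeter system of type Aₙ on its own group. -/
def CS (n : ℕ) : CoxeterSystem (Aₙ n) (Aₙ n).Group := (Aₙ n).toCoxeterSystem

/-- abbreviation for the simple generators -/
def S (i : Fin n) : (Aₙ n).Group := (CS n).simple i

/-- abbreviation for word products -/
def pw (l : List (Fin n)) : (Aₙ n).Group := (CS n).wordProd l

lemma pw_eq (l : List (Fin n)) : pw l = (l.map (S (n := n))).prod := rfl

lemma pw_nil : pw ([] : List (Fin n)) = 1 := (CS n).wordProd_nil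

lemma pw_append (a b : List (Fin n)) : pw (a ++ b) = pw a * pw b :=
  (CS n).wordProd_append a b

lemma pw_singleton (i : Fin n) : pw [i] = S i := (CS n).wordProd_singleton i

lemma S_mul_self (i : Fin n) : S i * S (n := n) i = 1 := (CS n).simple_mul_simple_self i

lemma Aₙ_apply_adj {i j : Fin n} (h : (i : ℕ) + 1 = (j : ℕ)) : Aₙ n i j = 3 := by
  have hne : i ≠ j := by intro he; subst he; omega
  simp [Aₙ, CoxeterMatrix.A, Matrix.of_apply, hne, h]

lemma Aₙ_apply_far {i j : Fin n} (h : (i : ℕ) + 2 ≤ (j : ℕ)) : Aₙ n i j = 2 := by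
  have hne : i ≠ j := by intro he; subst he; omega
  have h1 : ¬ ((j : ℕ) + 1 = (i : ℕ)) := by omega
  have h2 : ¬ ((i : ℕ) + 1 = (j : ℕ)) := by omega
  simp [Aₙ, CoxeterMatrix.A, Matrix.of_apply, hne, h1, h2]

lemma S_inv (i : Fin n) : (S (n := n) i)⁻¹ = S i := (CS n).inv_simple i

lemma commute_simple {i j : Fin n} (h : (i : ℕ) + 2 ≤ (j : ℕ)) :
    Commute (S i) (S j) := by
  have hp : (S i * S j) ^ (Aₙ n) i j = 1 := (CS n).simple_mul_simple_pow i j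
  rw [Aₙ_apply_far h] at hp
  have h2 : (S i * S j) * (S i * S j) = 1 := by
    have := hp; rwa [pow_two] at this
  have : S i * S j = (S i * S j)⁻¹ := by
    exact eq_inv_of_mul_eq_one_right h2
  rw [mul_inv_rev, S_inv, S_inv] at this
  exact this

lemma braid {i j : Fin n} (h : (i : ℕ) + 1 = (j : ℕ)) :
    S i * S j * S i = S j * S i * S j := by
  have hp : (S i * S j) ^ (Aₙ n) i j = 1 := (CS n).simple_mul_simple_pow i j
  rw [Aₙ_apply_adj h] at hp
  have h3 : (S i * S j) * (S i * S j) * (S i * S j) = 1 := by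
    have := hp; rwa [pow_succ, pow_two] at this
  have hp2 : (S j * S i) ^ (Aₙ n) j i = 1 := (CS n).simple_mul_simple_pow j i
  have hsym : (Aₙ n) j i = 3 := by rw [(Aₙ n).symmetric j i, Aₙ_apply_adj h]
  rw [hsym] at hp2
  have h3' : (S j * S i) * (S j * S i) * (S j * S i) = 1 := by
    have := hp2; rwa [pow_succ, pow_two] at this
  have : S i * S j * S i = (S j * S i * S j)⁻¹ := by
    apply eq_inv_of_mul_eq_one_right
    calc S j * S i * S j * (S i * S j * S i)
        = (S j * S i) * (S j * S i) * (S j * S i) := by group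
      _ = 1 := h3' 
  simp only [this, mul_inv_rev, S_inv, mul_assoc]

lemma commute_wordProd {g : (Aₙ n).Group} {l : List (Fin n)}
    (h : ∀ i ∈ l, Commute g (S i)) : Commute g (pw l) := by
  rw [pw_eq]
  exact Commute.list_prod_right _ _ (by
    intro x hx
    obtain ⟨i, hi, rfl⟩ := List.mem_map.mp hx
    exact h i hi)

/-- The measure on words. -/
def mu (l : List (Fin n)) : ℕ := (l.map fun i => 3 ^ (i : ℕ)).sum

lemma mu_append (a b : List (Fin n)) : mu (a ++ b) = mu a + mu b := by
  simp [mu]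

lemma mu_cons (i : Fin n) (b : List (Fin n)) : mu (i :: b) = 3 ^ (i : ℕ) + mu b := by
  simp [mu]

lemma mu_nil : mu ([] : List (Fin n)) = 0 := rfl

lemma eq_nil_of_mu_eq_zero {l : List (Fin n)} (h : mu l = 0) : l = [] := by
  cases l with
  | nil => rfl
  | cons a t =>
    exfalso
    rw [mu_cons] at h
    have : 0 < 3 ^ (a : ℕ) := Nat.pow_pos (by norm_num)
    omega

lemma mem_split_first {α : Type*} [DecidableEq α] {a : α} :
    ∀ {l : List α}, a ∈ l → ∃ x y, l = x ++ a :: y ∧ a ∉ x := by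
  intro l h
  induction l with
  | nil => simp at h
  | cons b t ih =>
    by_cases hb : b = a
    · exact ⟨[], t, by simp [hb], by simp⟩
    · have ht : a ∈ t := by
        rcases List.mem_cons.mp h with h1 | h1
        · exact absurd h1.symm hb
        · exact h1
      obtain ⟨x, y, hxy, hax⟩ := ih ht
      refine ⟨b :: x, y, by simp [hxy], ?_⟩
      simp only [List.mem_cons, not_or]
      exact ⟨fun h' => hb h'.symm, hax⟩

lemma prod_ofFn_update {G : Type*} [Monoid G] :
    ∀ {m : ℕ} (f : Fin m → G) (k : Fin m) (g : G),
      (∀ i : Fin m, k ≤ i → f i = 1) →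
      (List.ofFn (Function.update f k g)).prod = (List.ofFn f).prod * g := by
  intro m
  induction m with
  | zero => exact fun f k => k.elim0
  | succ m ih =>
    intro f k g hf
    rw [List.ofFn_succ', List.ofFn_succ', List.prod_concat, List.prod_concat]
    by_cases hk : k = Fin.last m
    · subst hk
      have h1 : (fun i : Fin m => Function.update f (Fin.last m) g i.castSucc)
          = fun i : Fin m => f i.castSucc := by
        funext i
        exact Function.update_of_ne (Fin.castSucc_lt_last i).ne _ _
      have h2 : Function.update f (Fin.last m) g (Fin.last m) = g := by simp
      have h3 : f (Fin.last m) = 1 := hf _ le_rfl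
      simp only [h1, h2, h3, mul_one]
    · obtain ⟨k', rfl⟩ : ∃ k' : Fin m, k'.castSucc = k := by
        refine ⟨k.castPred hk, ?_⟩
        simp
      have hlast : Function.update f k'.castSucc g (Fin.last m) = f (Fin.last m) :=
        Function.update_of_ne (by simpa using (Fin.castSucc_lt_last k').ne') _ _
      have hflast : f (Fin.last m) = 1 := hf _ (Fin.le_last _)
      have hcomp : (fun i : Fin m => Function.update f k'.castSucc g i.castSucc)
          = Function.update (fun i : Fin m => f i.castSucc) k' g := by
        funext i
        by_cases hi : i = k'
        · subst hi; simp
        · rw [Function.update_of_ne hi]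
          exact Function.update_of_ne (by simpa [Fin.castSucc_inj] using hi) _ _
      have hf' : ∀ i : Fin m, k' ≤ i → f i.castSucc = 1 := by
        intro i hi
        exact hf _ (by simpa [Fin.castSucc_le_castSucc_iff] using hi)
      rw [hcomp, ih _ _ _ hf', hlast, hflast, mul_one, mul_one]

end Stmt17Aux

namespace Stmt17Aux2
open Stmt17Aux
variable {n : ℕ}

lemma pw_cons (i : Fin n) (l : List (Fin n)) : pw (i :: l) = S i * pw l :=
  (CS n).wordProd_cons i l

lemma lemB_nil (j : Fin n) :
    ∃ w : List (Fin n), pw w = pw ([j] ++ ([] : List (Fin n)) ++ [j]) ∧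
      mu w < mu ([j] ++ ([] : List (Fin n)) ++ [j]) ∧ ∀ i ∈ w, (i : ℕ) ≤ (j : ℕ) := by
  refine ⟨[], ?_, ?_, by simp⟩
  · simp [pw_nil, pw_cons, pw_singleton, S_mul_self]
  · have : 0 < 3 ^ (j : ℕ) := Nat.pow_pos (by norm_num)
    simp only [mu_nil, mu_append, mu_cons]
    omega

lemma lemB : ∀ (K : ℕ) (j : Fin n), (j : ℕ) ≤ K → ∀ u : List (Fin n),
    (∀ i ∈ u, (i : ℕ) < (j : ℕ)) →
    ∃ w : List (Fin n), pw w = pw ([j] ++ u ++ [j]) ∧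
      mu w < mu ([j] ++ u ++ [j]) ∧ ∀ i ∈ w, (i : ℕ) ≤ (j : ℕ) := by
  intro K
  induction K with
  | zero =>
    intro j hj u hu
    have hu0 : u = [] := by
      cases u with
      | nil => rfl
      | cons a t => exact absurd (hu a (by simp)) (by omega)
    subst hu0; exact lemB_nil j
  | succ K ih =>
    intro j hj u hu
    by_cases hj0 : (j : ℕ) = 0
    · have hu0 : u = [] := by
        cases u with
        | nil => rfl
        | cons a t => exact absurd (hu a (by simp)) (by omega)
      subst hu0; exact lemB_nil j
    · obtain ⟨m, hm⟩ : ∃ m, (j : ℕ) = m + 1 := ⟨(j : ℕ) - 1, by omega⟩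
      have hmn : m < n := lt_trans (by omega) j.isLt
      set jf : Fin n := ⟨m, hmn⟩ with hjf
      have hjfval : (jf : ℕ) = m := rfl
      have hadj : (jf : ℕ) + 1 = (j : ℕ) := by omega
      by_cases hmem : jf ∈ u
      · obtain ⟨x, y, rfl, hx⟩ := mem_split_first hmem
        by_cases hy : jf ∈ y
        · -- at least two occurrences
          obtain ⟨u', y', rfl, hu'mem⟩ := mem_split_first hy
          have hu'lt : ∀ i ∈ u', (i : ℕ) < (jf : ℕ) := by
            intro i hi
            have h1 : (i : ℕ) < (j : ℕ) := hu i (by simp [hi])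
            have h2 : i ≠ jf := fun he => hu'mem (he ▸ hi)
            have h3 : (i : ℕ) ≠ m := fun hh => h2 (Fin.ext (by simp [hjfval, hh]))
            omega
          obtain ⟨w'', hw''eq, hw''mu, hw''le⟩ := ih jf (by omega) u' hu'lt
          refine ⟨[j] ++ x ++ w'' ++ y' ++ [j], ?_, ?_, ?_⟩
          · simp only [pw_append, pw_cons, pw_singleton, mul_assoc, pw_nil, mul_one] at hw''eq ⊢
            rw [hw''eq]
            try simp only [mul_assoc]
          · simp only [mu_append, mu_cons, mu_nil, hjfval] at hw''mu ⊢
            omega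
          · intro i hi
            simp only [List.mem_append, List.mem_singleton] at hi
            rcases hi with ((((rfl | hi) | hi) | hi) | rfl)
            · exact le_rfl
            · exact le_of_lt (hu i (by simp [hi]))
            · exact le_trans (hw''le i hi) (by omega)
            · exact le_of_lt (hu i (by simp [hi]))
            · exact le_rfl
        · -- exactly one occurrence
          have hxylt : ∀ i, (i ∈ x ∨ i ∈ y) → (i : ℕ) + 2 ≤ (j : ℕ) := by
            intro i hi
            have h1 : (i : ℕ) < (j : ℕ) := hu i (by rcases hi with hi | hi <;> simp [hi])
            have h2 : i ≠ jf := by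
              rcases hi with hi | hi
              · exact fun he => hx (he ▸ hi)
              · exact fun he => hy (he ▸ hi)
            have h3 : (i : ℕ) ≠ m := fun hh => h2 (Fin.ext (by simp [hjfval, hh]))
            omega
          have hcx : Commute (S j) (pw x) :=
            commute_wordProd (fun i hi => (commute_simple (hxylt i (Or.inl hi))).symm)
          have hcy : Commute (S j) (pw y) :=
            commute_wordProd (fun i hi => (commute_simple (hxylt i (Or.inr hi))).symm)
          refine ⟨x ++ [jf, j, jf] ++ y, ?_, ?_, ?_⟩
          · have e1 : pw (x ++ [jf, j, jf] ++ y)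
                = pw x * (S jf * (S j * (S jf * pw y))) := by
              simp [pw_append, pw_cons, pw_singleton, pw_nil, mul_assoc]
            have e2 : pw ([j] ++ (x ++ jf :: y) ++ [j])
                = S j * (pw x * (S jf * (pw y * S j))) := by
              simp [pw_append, pw_cons, pw_singleton, pw_nil, mul_assoc]
            rw [e1, e2, ← hcy.eq, ← mul_assoc (S j) (pw x), hcx.eq]
            have hbr := braid hadj
            calc pw x * (S jf * (S j * (S jf * pw y)))
                = pw x * ((S jf * S j * S jf) * pw y) := by group
              _ = pw x * ((S j * S jf * S j) * pw y) := by rw [hbr]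
              _ = pw x * S j * (S jf * (S j * pw y)) := by group
          · have hpow : (3:ℕ) ^ m < 3 ^ (m + 1) :=
              Nat.pow_lt_pow_right (by norm_num) (Nat.lt_succ_self m)
            simp only [mu_append, mu_cons, mu_nil, hjfval, hm]
            omega
          · intro i hi
            simp only [List.mem_append, List.mem_cons, List.mem_singleton] at hi
            rcases hi with (hi | (rfl | (rfl | (rfl | hi)))) | hi
            · exact le_of_lt (hu i (by simp [hi]))
            · omega
            · exact le_rfl
            · omega
            · simp at hi
            · exact le_of_lt (hu i (by simp [hi]))
      · -- no occurrence
        have hult : ∀ i ∈ u, (i : ℕ) + 2 ≤ (j : ℕ) := by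
          intro i hi
          have h1 : (i : ℕ) < (j : ℕ) := hu i hi
          have h2 : i ≠ jf := fun he => hmem (he ▸ hi)
          have h3 : (i : ℕ) ≠ m := fun hh => h2 (Fin.ext (by simp [hjfval, hh]))
          omega
        have hcu : Commute (S j) (pw u) :=
          commute_wordProd (fun i hi => (commute_simple (hult i hi)).symm)
        refine ⟨u, ?_, ?_, fun i hi => le_of_lt (hu i hi)⟩
        · have : pw ([j] ++ u ++ [j]) = S j * pw u * S j := by
            simp [pw_append, pw_cons, pw_singleton, pw_nil, mul_assoc]
          rw [this, hcu.eq, mul_assoc, S_mul_self, mul_one]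
        · have : 0 < 3 ^ (j : ℕ) := Nat.pow_pos (by norm_num)
          simp only [mu_append, mu_cons, mu_nil]
          omega

lemma lemE_triv (j : ℕ) :
    ∃ δ : Fin n → (Aₙ n).Group,
      (∀ i, δ i = 1 ∨ δ i = S i) ∧ (∀ i : Fin n, j ≤ (i : ℕ) → δ i = 1) ∧
      ∃ c : (Aₙ n).Group, (∀ i : Fin n, j ≤ (i : ℕ) → Commute c (S i)) ∧
        c * pw ([] : List (Fin n)) * c⁻¹ = (List.ofFn δ).prod := by
  refine ⟨fun _ => 1, fun i => Or.inl rfl, fun i _ => rfl, 1,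
    fun i _ => Commute.one_left _, ?_⟩
  have h1 : (List.ofFn (fun _ : Fin n => (1 : (Aₙ n).Group))).prod = 1 :=
    List.prod_eq_one (by
      intro x hx
      rcases List.mem_ofFn.mp hx with ⟨y, rfl⟩
      rfl)
  rw [h1, pw_nil]
  simp

lemma lemE : ∀ (j : ℕ) (fuel : ℕ) (u : List (Fin n)), mu u ≤ fuel →
    (∀ i ∈ u, (i : ℕ) < j) →
    ∃ δ : Fin n → (Aₙ n).Group,
      (∀ i, δ i = 1 ∨ δ i = S i) ∧ (∀ i : Fin n, j ≤ (i : ℕ) → δ i = 1) ∧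
      ∃ c : (Aₙ n).Group, (∀ i : Fin n, j ≤ (i : ℕ) → Commute c (S i)) ∧
        c * pw u * c⁻¹ = (List.ofFn δ).prod := by
  intro j
  induction j with
  | zero =>
    intro fuel u hfu hu
    have hu0 : u = [] := by
      cases u with
      | nil => rfl
      | cons a t => exact absurd (hu a (by simp)) (by omega)
    subst hu0
    exact lemE_triv 0
  | succ k ihj =>
    intro fuel
    induction fuel with
    | zero =>
      intro u hfu hu
      have hu0 : u = [] := eq_nil_of_mu_eq_zero (by omega)
      subst hu0
      exact lemE_triv (k + 1)
    | succ F ihf =>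
      intro u hfu hu
      by_cases hkn : k < n
      · set jf : Fin n := ⟨k, hkn⟩ with hjf
        have hjfval : (jf : ℕ) = k := rfl
        by_cases hmem : jf ∈ u
        · obtain ⟨x, y, rfl, hx⟩ := mem_split_first hmem
          by_cases hy : jf ∈ y
          · -- at least two occurrences of jf
            obtain ⟨u', y', rfl, hu'mem⟩ := mem_split_first hy
            have hu'lt : ∀ i ∈ u', (i : ℕ) < (jf : ℕ) := by
              intro i hi
              have h1 : (i : ℕ) < k + 1 := hu i (by simp [hi])
              have h2 : i ≠ jf := fun he => hu'mem (he ▸ hi)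
              have h3 : (i : ℕ) ≠ k := fun hh => h2 (Fin.ext (by simp [hjfval, hh]))
              omega
            obtain ⟨w'', hw''eq, hw''mu, hw''le⟩ := lemB k jf le_rfl u' hu'lt
            have hpw2 : pw (x ++ (w'' ++ y')) = pw (x ++ jf :: (u' ++ jf :: y')) := by
              simp only [pw_append, pw_cons, pw_singleton, pw_nil, one_mul, mul_one,
                mul_assoc] at hw''eq ⊢
              rw [hw''eq]
              try simp only [one_mul, mul_one, mul_assoc]
            have hmu2 : mu (x ++ (w'' ++ y')) ≤ F := by
              simp only [mu_append, mu_cons, mu_nil, hjfval] at hw''mu hfu ⊢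
              omega
            have hlt2 : ∀ i ∈ x ++ (w'' ++ y'), (i : ℕ) < k + 1 := by
              intro i hi
              simp only [List.mem_append] at hi
              rcases hi with hi | (hi | hi)
              · exact hu i (by simp [hi])
              · exact lt_of_le_of_lt (le_trans (hw''le i hi) (le_refl k)) (Nat.lt_succ_self k)
              · exact hu i (by simp [hi])
            obtain ⟨δ, h1, h2, c, h3, h4⟩ := ihf (x ++ (w'' ++ y')) hmu2 hlt2
            exact ⟨δ, h1, h2, c, h3, by rw [← hpw2]; exact h4⟩
          · -- exactly one occurrence of jf
            have hxylt : ∀ i, (i ∈ x ∨ i ∈ y) → (i : ℕ) < k := by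
              intro i hi
              have h1 : (i : ℕ) < k + 1 := hu i (by rcases hi with hi | hi <;> simp [hi])
              have h2 : i ≠ jf := by
                rcases hi with hi | hi
                · exact fun he => hx (he ▸ hi)
                · exact fun he => hy (he ▸ hi)
              have h3 : (i : ℕ) ≠ k := fun hh => h2 (Fin.ext (by simp [hjfval, hh]))
              omega
            obtain ⟨δ', h1', h2', c', h3', h4'⟩ :=
              ihj (mu (y ++ x)) (y ++ x) le_rfl
                (by intro i hi; simp only [List.mem_append] at hi
                    exact hxylt i hi.symm)
            have hcjf : Commute c' (S jf) := h3' jf le_rfl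
            refine ⟨Function.update δ' jf (S jf), ?_, ?_, c' * pw y, ?_, ?_⟩
            · intro i
              by_cases hi : i = jf
              · subst hi; right; simp
              · rw [Function.update_of_ne hi]; exact h1' i
            · intro i hi
              have hne : i ≠ jf := by
                intro he; subst he; rw [hjfval] at hi; omega
              rw [Function.update_of_ne hne]
              exact h2' i (by omega)
            · intro i hi
              refine Commute.mul_left (h3' i (by omega)) ?_
              refine (commute_wordProd ?_).symm
              intro t ht
              exact (commute_simple (by
                have := hxylt t (Or.inr ht); omega)).symm
            · have hu_eq : pw (x ++ jf :: y) = pw x * (S jf * pw y) := by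
                simp [pw_append, pw_cons, pw_singleton, pw_nil, mul_assoc]
              have key : c' * (pw (y ++ x) * S jf) * c'⁻¹ = (List.ofFn δ').prod * S jf := by
                calc c' * (pw (y ++ x) * S jf) * c'⁻¹
                    = (c' * pw (y ++ x) * c'⁻¹) * (c' * S jf * c'⁻¹) := by group
                  _ = (List.ofFn δ').prod * (c' * S jf * c'⁻¹) := by rw [h4']
                  _ = (List.ofFn δ').prod * S jf := by
                      rw [hcjf.eq]; group
              calc (c' * pw y) * pw (x ++ jf :: y) * (c' * pw y)⁻¹
                  = c' * ((pw y * pw x) * S jf) * c'⁻¹ := by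
                    rw [hu_eq]; group
                _ = c' * (pw (y ++ x) * S jf) * c'⁻¹ := by rw [pw_append]
                _ = (List.ofFn δ').prod * S jf := key
                _ = (List.ofFn (Function.update δ' jf (S jf))).prod :=
                    (prod_ofFn_update δ' jf (S jf)
                      (fun i hi => h2' i (by
                        rw [Fin.le_def] at hi; omega))).symm
        · -- jf not in u : all letters < k
          have hu' : ∀ i ∈ u, (i : ℕ) < k := by
            intro i hi
            have h1 : (i : ℕ) < k + 1 := hu i hi
            have h2 : i ≠ jf := fun he => hmem (he ▸ hi)
            have h3 : (i : ℕ) ≠ k := fun hh => h2 (Fin.ext (by simp [hjfval, hh]))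
            omega
          obtain ⟨δ, h1, h2, c, h3, h4⟩ := ihj (mu u) u le_rfl hu'
          exact ⟨δ, h1, fun i hi => h2 i (by omega), c,
            fun i hi => h3 i (by omega), h4⟩
      · -- k ≥ n : all letters < k trivially
        have hu' : ∀ i ∈ u, (i : ℕ) < k := by
          intro i _
          exact lt_of_lt_of_le i.isLt (not_lt.mp hkn)
        obtain ⟨δ, h1, h2, c, h3, h4⟩ := ihj (mu u) u le_rfl hu'
        exact ⟨δ, h1, fun i hi => h2 i (by omega), c,
          fun i hi => h3 i (by omega), h4⟩

end Stmt17Aux2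

open Stmt17Aux Stmt17Aux2 in
/-- In the finite Coxeter group `Aₙ` (the symmetric group `S_{n+1}` with Coxeter generators
`a₁,…,aₙ`), every element is conjugate to an element in echelon form `δ₁δ₂⋯δₙ` with each
`δᵢ ∈ {1, aᵢ}`. -/
theorem stmt17 (n : ℕ) (w : (CoxeterMatrix.Aₙ n).Group) :
    ∃ δ : Fin n → (CoxeterMatrix.Aₙ n).Group,
      (∀ i, δ i = 1 ∨ δ i = (CoxeterMatrix.Aₙ n).simple i) ∧
      IsConj ((List.ofFn δ).prod) w := by
  obtain ⟨u, hu⟩ := (CS n).wordProd_surjective w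
  obtain ⟨δ, h1, -, c, -, h4⟩ := lemE n (mu u) u le_rfl (fun i _ => i.isLt)
  refine ⟨δ, h1, ?_⟩
  rw [isConj_iff]
  refine ⟨c⁻¹, ?_⟩
  have : c⁻¹ * ((List.ofFn δ).prod) * (c⁻¹)⁻¹ = pw u := by
    rw [← h4]; group
  rw [this]
  exact hu
end
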